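/- For Ψ(θ) = sin(θ), the Fourier coefficient of 𝕌₀(θ) = −1 − cos(θ) at ℓ = ±1 equals −π, and hence the constant state g ≡ 1/(2π) of the homogeneous Vicsek equation is linearly stable if κ/ν < 2 and linearly unstable if κ/ν > 2. -/

import Mathlib

open Real MeasureTheory intervalIntegral

lemma Jval (k : ℤ) : (∫ θ in (-π)..π, Complex.exp (Complex.I * k * θ)) =
    if k = 0 then (2 * π : ℂ) else 0 := by
  split_ifs with h
  · subst h
    simp; ring
  · have hc : (Complex.I * k : ℂ) ≠ 0 := by
      simp [Complex.I_ne_zero, Complex.ext_iff]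
      exact_mod_cast h
    rw [integral_exp_mul_complex hc]
    have h1 : Complex.I * (k : ℂ) * (π : ℂ) = Complex.I * k * ((-π : ℝ) : ℂ) + k * (2 * π * Complex.I) := by
      push_cast; ring
    rw [h1, Complex.exp_add, Complex.exp_int_mul_two_pi_mul_I, mul_one]
    norm_num

lemma hpt (ℓ : ℤ) (θ : ℝ) :
    ((-1 - Real.cos θ : ℝ) : ℂ) * Complex.exp (-Complex.I * (ℓ : ℂ) * (θ : ℂ)) =
    -Complex.exp (Complex.I * ((-ℓ : ℤ) : ℂ) * θ) -
      (Complex.exp (Complex.I * ((1 - ℓ : ℤ) : ℂ) * θ) +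
        Complex.exp (Complex.I * ((-1 - ℓ : ℤ) : ℂ) * θ)) / 2 := by
  have h1 : Complex.I * ((1 - ℓ : ℤ) : ℂ) * θ = (θ : ℂ) * Complex.I + -Complex.I * ℓ * θ := by
    push_cast; ring
  have h2 : Complex.I * ((-1 - ℓ : ℤ) : ℂ) * θ = -(θ : ℂ) * Complex.I + -Complex.I * ℓ * θ := by
    push_cast; ring
  have h3 : Complex.I * ((-ℓ : ℤ) : ℂ) * θ = -Complex.I * ℓ * θ := by push_cast; ring
  rw [h1, h2, h3, Complex.exp_add, Complex.exp_add]
  push_cast [Complex.ofReal_cos, Complex.cos]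
  ring

lemma cInt (k : ℤ) : IntervalIntegrable (fun θ : ℝ => Complex.exp (Complex.I * k * θ))
    MeasureTheory.volume (-π) π :=
  (Complex.continuous_exp.comp (continuous_const.mul Complex.continuous_ofReal)).intervalIntegrable _ _

lemma Uval (ℓ : ℤ) :
    (∫ θ in (-π)..π, ((-1 - Real.cos θ : ℝ) : ℂ) * Complex.exp (-Complex.I * (ℓ : ℂ) * (θ : ℂ)))
    = -(if (-ℓ : ℤ) = 0 then (2 * π : ℂ) else 0) -
      ((if (1 - ℓ : ℤ) = 0 then (2 * π : ℂ) else 0) +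
        (if (-1 - ℓ : ℤ) = 0 then (2 * π : ℂ) else 0)) / 2 := by
  rw [intervalIntegral.integral_congr (g := fun θ : ℝ =>
      -Complex.exp (Complex.I * ((-ℓ : ℤ) : ℂ) * θ) -
      (Complex.exp (Complex.I * ((1 - ℓ : ℤ) : ℂ) * θ) +
        Complex.exp (Complex.I * ((-1 - ℓ : ℤ) : ℂ) * θ)) / 2) (fun θ _ => hpt ℓ θ)]
  have I1 : IntervalIntegrable (fun θ : ℝ => -Complex.exp (Complex.I * ((-ℓ : ℤ) : ℂ) * θ))
      MeasureTheory.volume (-π) π := (cInt (-ℓ)).neg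
  have I2 : IntervalIntegrable (fun θ : ℝ => (Complex.exp (Complex.I * ((1 - ℓ : ℤ) : ℂ) * θ) +
      Complex.exp (Complex.I * ((-1 - ℓ : ℤ) : ℂ) * θ)) / 2) MeasureTheory.volume (-π) π :=
    ((cInt (1 - ℓ)).add (cInt (-1 - ℓ))).div_const 2
  rw [intervalIntegral.integral_sub I1 I2, intervalIntegral.integral_neg,
    intervalIntegral.integral_div,
    intervalIntegral.integral_add (cInt (1 - ℓ)) (cInt (-1 - ℓ)), Jval, Jval, Jval]

/-- for Ψ = sin, 𝕌₀(θ) = -1 - cos θ has Fourier coefficients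
𝕌₀̂(±1) = -π, and the constant state is linearly stable if κ/ν < 2 and linearly
unstable if κ/ν > 2. -/
theorem sine_kernel_phase_transition
    (κ ν : ℝ) (hκ : 0 < κ) (hν : 0 < ν)
    (Uhat : ℤ → ℂ)
    (hUhat : ∀ ℓ : ℤ, Uhat ℓ = ∫ θ in (-π)..π,
      ((-1 - Real.cos θ : ℝ) : ℂ) * Complex.exp (-Complex.I * (ℓ : ℂ) * (θ : ℂ))) :
    Uhat 1 = (-π : ℝ) ∧ Uhat (-1) = (-π : ℝ) ∧
    (κ / ν < 2 → ∀ ℓ : ℤ, ℓ ≠ 0 → κ / (2 * π) * ‖Uhat ℓ‖ < ν) ∧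
    (κ / ν > 2 → ∃ ℓ : ℤ, ℓ ≠ 0 ∧ -(κ / (2 * π)) * (Uhat ℓ).re > ν) := by
  have hU : ∀ ℓ : ℤ, Uhat ℓ = if ℓ = 1 ∨ ℓ = -1 then ((-π : ℝ) : ℂ)
      else if ℓ = 0 then ((-(2 * π) : ℝ) : ℂ) else 0 := by
    intro ℓ
    rw [hUhat ℓ, Uval ℓ]
    rcases eq_or_ne ℓ 1 with h1 | h1
    · subst h1; norm_num
    rcases eq_or_ne ℓ (-1) with h2 | h2
    · subst h2; norm_num
    rcases eq_or_ne ℓ 0 with h0 | h0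
    · subst h0; norm_num [h1]
    · have : ¬((-ℓ : ℤ) = 0) := by omega
      have : ¬((1 - ℓ : ℤ) = 0) := by omega
      have : ¬((-1 - ℓ : ℤ) = 0) := by omega
      simp_all
  have hU1 : Uhat 1 = ((-π : ℝ) : ℂ) := by rw [hU]; norm_num
  have hUm1 : Uhat (-1) = ((-π : ℝ) : ℂ) := by rw [hU]; norm_num
  refine ⟨hU1, hUm1, ?_, ?_⟩
  · intro hlt ℓ hℓ
    have hπ := Real.pi_pos
    have hκν : κ < 2 * ν := by
      rwa [div_lt_iff₀ hν] at hlt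
    rcases eq_or_ne ℓ 1 with h1 | h1
    · subst h1
      rw [hU1]
      have : ‖((-π : ℝ) : ℂ)‖ = π := by
        rw [Complex.norm_real, Real.norm_eq_abs, abs_neg, abs_of_pos hπ]
      rw [this]
      rw [div_mul_eq_mul_div, mul_comm]
      rw [div_lt_iff₀ (by positivity)]
      nlinarith
    rcases eq_or_ne ℓ (-1) with h2 | h2
    · subst h2
      rw [hUm1]
      have : ‖((-π : ℝ) : ℂ)‖ = π := by
        rw [Complex.norm_real, Real.norm_eq_abs, abs_neg, abs_of_pos hπ]
      rw [this, div_mul_eq_mul_div, mul_comm, div_lt_iff₀ (by positivity)]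
      nlinarith
    · rw [hU ℓ]
      simp [h1, h2, hℓ]
      positivity
  · intro hgt
    refine ⟨1, one_ne_zero, ?_⟩
    rw [hU1]
    have hπ := Real.pi_pos
    have hκν : 2 * ν < κ := by
      rwa [gt_iff_lt, lt_div_iff₀ hν] at hgt
    have : (((-π : ℝ) : ℂ)).re = -π := by simp
    rw [this]
    have : -(κ / (2 * π)) * -π = κ / 2 := by
      field_simp
    rw [this]
    linarith
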